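/- Let p, q, r₀, s₀ be positive integers with q·r₀ − p·s₀ = 1 and let N ∈ ℕ. If m = (m₁, m₂) = k₁·(r₀, s₀) + k₂·(p, q) with integers k₁ ≥ 1 and k₂ ≥ (N+1)·k₁ + 1, and m₁ ≥ 1, then m₂/m₁ ≥ (s₀ + (N+1)q)/(r₀ + (N+1)p). -/

import Mathlib

theorem slope_ge_in_B1 (p q r₀ s₀ : ℤ) (hp : 0 < p) (hq : 0 < q)
    (hr₀ : 0 < r₀) (hs₀ : 0 < s₀) (hbez : q * r₀ - p * s₀ = 1) (N : ℕ)
    (k₁ k₂ m₁ m₂ : ℤ) (hk₁ : 1 ≤ k₁) (hk₂ : (N + 1 : ℤ) * k₁ + 1 ≤ k₂)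
    (hm₁ : m₁ = k₁ * r₀ + k₂ * p) (hm₂ : m₂ = k₁ * s₀ + k₂ * q)
    (hm₁pos : 1 ≤ m₁) :
    ((s₀ : ℚ) + (N + 1) * q) / ((r₀ : ℚ) + (N + 1) * p) ≤ (m₂ : ℚ) / (m₁ : ℚ) := by
  have key : (s₀ + (N + 1) * q) * m₁ ≤ m₂ * (r₀ + (N + 1) * p) := by
    subst hm₁ hm₂
    nlinarith [mul_le_mul_of_nonneg_left hk₂ hq.le, hk₂, hk₁, hp, hq]
  have hd1 : (0 : ℚ) < (r₀ : ℚ) + (N + 1) * p := by positivity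
  have hd2 : (0 : ℚ) < (m₁ : ℚ) := by exact_mod_cast hm₁pos
  rw [div_le_div_iff₀ hd1 hd2]
  exact_mod_cast key
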